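/- For every nonzero integer k, the extended Cygan spheres of radius 2/√3 centered at the boundary points (0, 0) and (−2k, 8k/√3) of the Heisenberg group are disjoint subsets of ℂ × ℝ × ℝ≥0; that is, there is no point (z,t,u) with u ≥ 0 satisfying both | |z|² + u − i·t | = 4/3 and | |z+2k|² + u − i·(t − 8k/√3 + 2·Im(z·(−2k))) | = 4/3. -/

import Mathlib

lemma poly_key (a E m : ℝ) (ha0 : 0 ≤ a) (ha : a ≤ 4/3) (hm : 1 ≤ m)
    (hE0 : 0 ≤ E) (hE : E ≤ 4/9 - a^2/8) :
    (4096/3) * m^2 * E < (16*m*E + (4*m + 4/3 - a)^2)^2 := by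
  have hm0 : (0:ℝ) ≤ m := by linarith
  have hd : (0:ℝ) ≤ 4/3 - a := by linarith
  have hm1 : (0:ℝ) ≤ m - 1 := by linarith
  have hS : (0:ℝ) ≤ 4/9 - a^2/8 - E := by linarith
  have t12 : (0:ℝ) ≤ m*m - 1 := by nlinarith [sq_nonneg (m-1)]
  have t1 : (0:ℝ) ≤ m*m*E*(m-1) := by positivity
  have t2 : (0:ℝ) ≤ m*m*(m*m - 1) := by positivity
  have t3 : (0:ℝ) ≤ m*m*(4/3 - a)*(m-1) := by positivity
  have t4 : (0:ℝ) ≤ m*(4/3 - a)^2*E := by positivity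
  have t5 : (0:ℝ) ≤ m*m*(4/3 - a)^2 := by positivity
  have t6 : (0:ℝ) ≤ m*(4/3 - a)^3 := by positivity
  have t7 : (0:ℝ) ≤ (4/3 - a)^4 := by positivity
  have t8 : (0:ℝ) ≤ m*m*E*E := by positivity
  have t9 : (0:ℝ) ≤ m*m*(4/3 - a)*E := by positivity
  have t10 : (0:ℝ) ≤ m*m*(4/9 - a^2/8 - E) := by positivity
  have t11 : (0:ℝ) ≤ m*m*(a - 6/5)^2 := by positivity
  have t13 : (1:ℝ) ≤ m*m := by linarith
  nlinarith [t1, t2, t3, t4, t5, t6, t7, t8, t9, t10, t11, t13]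

lemma le_of_sq_add (a s : ℝ) (h : a^2 + s^2 = 16/9) (h0 : 0 ≤ a) : a ≤ 4/3 := by
  nlinarith [sq_nonneg s, sq_nonneg (a - 4/3)]

set_option maxHeartbeats 1600000 in
lemma real_key (K x y u t w : ℝ) (hK : 1 ≤ K) (hu : 0 ≤ u) (hw : w^2 = 3)
    (h1 : (x^2+y^2+u)^2 + t^2 = 16/9)
    (h2 : ((x+2*K)^2+y^2+u)^2 + (t - 8*K*w/3 - 4*K*y)^2 = 16/9) : False := by
  obtain ⟨a, hadef⟩ : ∃ r : ℝ, r = x^2+y^2+u := ⟨_, rfl⟩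
  obtain ⟨b, hbdef⟩ : ∃ r : ℝ, r = (x+2*K)^2+y^2+u := ⟨_, rfl⟩
  obtain ⟨m, hmdef⟩ : ∃ r : ℝ, r = K^2 := ⟨_, rfl⟩
  obtain ⟨e, hedef⟩ : ∃ r : ℝ, r = y + 2*w/3 := ⟨_, rfl⟩
  obtain ⟨E, hEdef⟩ : ∃ r : ℝ, r = e^2 := ⟨_, rfl⟩
  have h1' : a^2 + t^2 = 16/9 := by rw [hadef]; exact h1
  have h2' : b^2 + (t - 4*K*e)^2 = 16/9 := by
    rw [hbdef, hedef]; linear_combination h2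
  have hm : (1:ℝ) ≤ m := by
    rw [hmdef]
    calc (1:ℝ) = 1*1 := by ring
      _ ≤ K*K := mul_le_mul hK hK zero_le_one (le_trans zero_le_one hK)
      _ = K^2 := by ring
  have ha0 : (0:ℝ) ≤ a := by rw [hadef]; positivity
  have hb0 : (0:ℝ) ≤ b := by rw [hbdef]; positivity
  have hE0 : (0:ℝ) ≤ E := by rw [hEdef]; positivity
  have ha : a ≤ 4/3 := le_of_sq_add a t h1' ha0
  have hb : b ≤ 4/3 := le_of_sq_add b (t - 4*K*e) h2' hb0
  have hbeq : b = a + 4*K*x + 4*m := by rw [hadef, hbdef, hmdef]; ring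
  have hcx : a + 4*m - 4/3 ≤ -(4*K*x) := by linarith [hbeq ▸ hb]
  have hc0 : (0:ℝ) ≤ a + 4*m - 4/3 := by linarith
  have hx2 : (a + 4*m - 4/3)^2 ≤ 16*m*x^2 := by
    have h := mul_self_le_mul_self hc0 hcx
    have h2'' : -(4*K*x) * -(4*K*x) = 16*m*x^2 := by rw [hmdef]; ring
    calc (a + 4*m - 4/3)^2 = (a + 4*m - 4/3) * (a + 4*m - 4/3) := by ring
      _ ≤ -(4*K*x) * -(4*K*x) := h
      _ = 16*m*x^2 := h2''
  have hid : 16*m*E = 2*t^2 + 2*(t - 4*K*e)^2 - (t + (t - 4*K*e))^2 := by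
    rw [hmdef, hEdef]; ring
  have hts : 16*m*E ≤ 64/9 - 2*a^2 - 2*b^2 := by
    linarith [sq_nonneg (t + (t - 4*K*e)), hid, h1', h2']
  have hmE : (0:ℝ) ≤ (m - 1) * E := mul_nonneg (by linarith) hE0
  have hE : E ≤ 4/9 - a^2/8 := by nlinarith [sq_nonneg b, hts, hmE]
  have hy2 : y^2 = E - (4*w/3)*e + 4/3 := by
    rw [hEdef, hedef]; linear_combination (4/9 : ℝ) * hw
  have hxa : x^2 = a - y^2 - u := by rw [hadef]; ring
  have H1 : (a + 4*m - 4/3)^2 ≤ 16*m*(a - E + (4*w/3)*e - 4/3 - u) := by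
    rw [hxa, hy2] at hx2; linarith [hx2]
  have hmu : (0:ℝ) ≤ 16 * m * u := by positivity
  have hiden : (a + 4*m - 4/3)^2 + 16*m*(4/3 - a) = (4*m + 4/3 - a)^2 := by ring
  have H2 : (4*m + 4/3 - a)^2 + 16*m*E ≤ (64*w/3)*m*e := by
    linarith [H1, hiden, hmu]
  have H2l : (0:ℝ) ≤ (4*m + 4/3 - a)^2 + 16*m*E := by positivity
  have H3 := mul_self_le_mul_self H2l H2
  have H4 : ((4*m + 4/3 - a)^2 + 16*m*E) * ((4*m + 4/3 - a)^2 + 16*m*E)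
      = (16*m*E + (4*m + 4/3 - a)^2)^2 := by ring
  have H5 : ((64*w/3)*m*e) * ((64*w/3)*m*e) = (4096/3)*m^2*E := by
    rw [hEdef]; linear_combination (4096/9 * m^2 * e^2) * hw
  have key := poly_key a E m ha0 ha hm hE0 hE
  rw [H4, H5] at H3
  linarith

theorem isometric_spheres_Ikplus_disjoint (k : ℤ) (hk : k ≠ 0) :
    ∀ (z : ℂ) (t u : ℝ), 0 ≤ u →
      ¬ (‖((‖z‖ ^ 2 + u : ℝ) : ℂ) - (t : ℂ) * Complex.I‖ = 4/3 ∧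
         ‖((‖z + 2 * (k : ℂ)‖ ^ 2 + u : ℝ) : ℂ) -
           ((t - 8 * (k : ℝ) / Real.sqrt 3 + 2 * (z * (-2 * (k : ℂ))).im : ℝ) : ℂ)
             * Complex.I‖ = 4/3) := by
  intro z t u hu
  rintro ⟨h1, h2⟩
  set K := (k:ℝ) with hKdef
  set w := Real.sqrt 3 with hwdef
  have hw : w^2 = 3 := Real.sq_sqrt (by norm_num)
  have hw0 : 0 < w := Real.sqrt_pos.2 (by norm_num)
  have hA : ‖z‖ ^ 2 = z.re^2 + z.im^2 := by
    rw [Complex.sq_norm, Complex.normSq_apply]; ring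
  have hB : ‖z + 2*(k:ℂ)‖ ^ 2 = (z.re + 2*K)^2 + z.im^2 := by
    rw [Complex.sq_norm, Complex.normSq_apply]
    simp [Complex.add_re, Complex.add_im, Complex.mul_re, Complex.mul_im]
    ring
  have hIm : (z * (-2*(k:ℂ))).im = -2*K*z.im := by
    simp [Complex.mul_im]; ring
  have habs : ∀ (A s : ℝ), ‖(A:ℂ) - (s:ℂ) * Complex.I‖ = 4/3 →
      A^2 + s^2 = 16/9 := by
    intro A s h
    have hsq : A^2 + s^2 = ‖(A:ℂ) - (s:ℂ) * Complex.I‖ ^ 2 := by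
      rw [Complex.sq_norm, Complex.normSq_apply]
      simp [Complex.sub_re, Complex.sub_im]
      ring
    rw [h] at hsq; norm_num at hsq; exact hsq
  have e1 : (z.re^2 + z.im^2 + u)^2 + t^2 = 16/9 := by
    have := habs (‖z‖ ^ 2 + u) t h1
    rw [hA] at this; exact this
  have hdiv : 8*K/w = 8*K*w/3 := by
    rw [div_eq_div_iff (ne_of_gt hw0) (by norm_num)]
    linear_combination (-8*K) * hw
  have e2 : ((z.re + 2*K)^2 + z.im^2 + u)^2 + (t - 8*K*w/3 - 4*K*z.im)^2 = 16/9 := by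
    have := habs (‖z + 2*(k:ℂ)‖ ^ 2 + u)
      (t - 8 * K / w + 2 * (z * (-2*(k:ℂ))).im) h2
    rw [hB, hIm, hdiv] at this
    convert this using 3
    ring
  have hK1 : (1:ℝ) ≤ |K| := by
    rw [hKdef, ← Int.cast_abs]
    exact_mod_cast Int.one_le_abs hk
  rcases le_or_gt 1 K with hpos | hneg
  · exact real_key K z.re z.im u t w hpos hu hw e1 e2
  · have hKneg : 1 ≤ -K := by
      rcases abs_cases K with ⟨h', _⟩ | ⟨h', _⟩
      · linarith [h' ▸ hK1]
      · linarith [h' ▸ hK1]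
    have e1' : ((-z.re)^2 + z.im^2 + u)^2 + (-t)^2 = 16/9 := by
      linear_combination e1
    have e2' : (((-z.re) + 2*(-K))^2 + z.im^2 + u)^2
        + ((-t) - 8*(-K)*w/3 - 4*(-K)*z.im)^2 = 16/9 := by
      linear_combination e2
    exact real_key (-K) (-z.re) z.im u (-t) w hKneg hu hw e1' e2'
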